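/- Let H₁, H₂ be real Hilbert spaces and (X, Y) a pair of random variables with values in H₁ × H₂, square Bochner-integrable. Define the cross-covariance κ = E[X ⊗ Y] − E[X] ⊗ E[Y] ∈ H₁ ⊗ H₂. Then ‖κ‖²_{H₁⊗H₂} = E[⟨X,X'⟩⟨Y,Y'⟩] + E[⟨X,X'⟩]·E[⟨Y,Y''⟩] − 2E[⟨X,X'⟩⟨Y,Y''⟩], where (X,Y), (X',Y'), (X'',Y'') are i.i.d. copies of (X,Y). -/

import Mathlib

open MeasureTheory ProbabilityTheory
open scoped RealInnerProductSpace

/-- An abstract model of the Hilbert-space tensor product `H₁ ⊗ H₂`: a Hilbert space `T`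
together with a bilinear map `tmul` satisfying `⟪a⊗b, c⊗d⟫ = ⟪a,c⟫⟪b,d⟫`, whose simple
tensors span a dense subspace. -/
structure HilbertTensorProduct (H₁ H₂ T : Type*)
    [NormedAddCommGroup H₁] [InnerProductSpace ℝ H₁]
    [NormedAddCommGroup H₂] [InnerProductSpace ℝ H₂]
    [NormedAddCommGroup T] [InnerProductSpace ℝ T] where
  tmul : H₁ → H₂ → T
  add_left : ∀ a a' b, tmul (a + a') b = tmul a b + tmul a' b
  add_right : ∀ a b b', tmul a (b + b') = tmul a b + tmul a b'
  smul_left : ∀ (c : ℝ) a b, tmul (c • a) b = c • tmul a b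
  smul_right : ∀ (c : ℝ) a b, tmul a (c • b) = c • tmul a b
  inner_tmul : ∀ a b c d, ⟪tmul a b, tmul c d⟫ = ⟪a, c⟫ * ⟪b, d⟫
  dense_span : Dense (↑(Submodule.span ℝ {x : T | ∃ a b, x = tmul a b}) : Set T)


/-- HSIC as the squared Hilbert–Schmidt norm of the cross-covariance: for a
square-integrable law `γ` on `H₁ × H₂`, with `κ = E[X ⊗ Y] − E[X] ⊗ E[Y]`,
`‖κ‖² = E⟪X,X'⟫⟪Y,Y'⟫ + E⟪X,X'⟫ · E⟪Y,Y''⟫ − 2 E⟪X,X'⟫⟪Y,Y''⟫`, with independent copies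
expressed via iterated integrals against `γ`. -/
theorem norm_sq_cross_covariance_eq_expected_kernel
    {H₁ H₂ T : Type*}
    [NormedAddCommGroup H₁] [InnerProductSpace ℝ H₁] [CompleteSpace H₁]
    [NormedAddCommGroup H₂] [InnerProductSpace ℝ H₂] [CompleteSpace H₂]
    [NormedAddCommGroup T] [InnerProductSpace ℝ T] [CompleteSpace T]
    [MeasurableSpace H₁] [BorelSpace H₁] [MeasurableSpace H₂] [BorelSpace H₂]
    (P : HilbertTensorProduct H₁ H₂ T)
    (γ : Measure (H₁ × H₂)) [IsProbabilityMeasure γ]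
    (hi : Integrable (fun p : H₁ × H₂ => P.tmul p.1 p.2) γ)
    (h1 : MeasureTheory.MemLp (fun p : H₁ × H₂ => p.1) 2 γ)
    (h2 : MeasureTheory.MemLp (fun p : H₁ × H₂ => p.2) 2 γ) :
    ‖(∫ p, P.tmul p.1 p.2 ∂γ) - P.tmul (∫ p, p.1 ∂γ) (∫ p, p.2 ∂γ)‖ ^ 2
      = (∫ p, ∫ q, ⟪p.1, q.1⟫ * ⟪p.2, q.2⟫ ∂γ ∂γ)
        + (∫ p, ∫ q, ⟪p.1, q.1⟫ ∂γ ∂γ) * (∫ p, ∫ q, ⟪p.2, q.2⟫ ∂γ ∂γ)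
        - 2 * ∫ p, ∫ q, ∫ r, ⟪p.1, q.1⟫ * ⟪p.2, r.2⟫ ∂γ ∂γ ∂γ := by

  have hX : Integrable (fun p : H₁ × H₂ => p.1) γ := h1.integrable (by norm_num)
  have hY : Integrable (fun p : H₁ × H₂ => p.2) γ := h2.integrable (by norm_num)
  set μ := ∫ p, P.tmul p.1 p.2 ∂γ with hμ
  set m₁ := ∫ p, p.1 ∂γ with hm₁
  set m₂ := ∫ p, p.2 ∂γ with hm₂
  have key : ∀ v : T, ⟪v, μ⟫ = ∫ q, ⟪v, P.tmul q.1 q.2⟫ ∂γ := fun v =>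
    (integral_inner hi v).symm
  have key1 : ∀ v : H₁, ⟪v, m₁⟫ = ∫ q, ⟪v, q.1⟫ ∂γ := fun v => (integral_inner hX v).symm
  have key2 : ∀ v : H₂, ⟪v, m₂⟫ = ∫ q, ⟪v, q.2⟫ ∂γ := fun v => (integral_inner hY v).symm
  have hμμ : ⟪μ, μ⟫ = ∫ p, ∫ q, ⟪p.1, q.1⟫ * ⟪p.2, q.2⟫ ∂γ ∂γ := by
    rw [key μ]
    refine integral_congr_ae (Filter.Eventually.of_forall fun p => ?_)
    dsimp only
    rw [real_inner_comm, key]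
    refine integral_congr_ae (Filter.Eventually.of_forall fun q => ?_)
    dsimp only
    rw [real_inner_comm, P.inner_tmul, real_inner_comm p.1 q.1, real_inner_comm p.2 q.2]
  have hm₁m₁ : ⟪m₁, m₁⟫ = ∫ p, ∫ q, ⟪p.1, q.1⟫ ∂γ ∂γ := by
    rw [key1 m₁]
    refine integral_congr_ae (Filter.Eventually.of_forall fun p => ?_)
    dsimp only
    rw [real_inner_comm, key1]
  have hm₂m₂ : ⟪m₂, m₂⟫ = ∫ p, ∫ q, ⟪p.2, q.2⟫ ∂γ ∂γ := by
    rw [key2 m₂]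
    refine integral_congr_ae (Filter.Eventually.of_forall fun p => ?_)
    dsimp only
    rw [real_inner_comm, key2]
  have hmix : ⟪μ, P.tmul m₁ m₂⟫ = ∫ p, ∫ q, ∫ r, ⟪p.1, q.1⟫ * ⟪p.2, r.2⟫ ∂γ ∂γ ∂γ := by
    rw [real_inner_comm, key]
    refine integral_congr_ae (Filter.Eventually.of_forall fun p => ?_)
    dsimp only
    rw [P.inner_tmul, real_inner_comm p.1 m₁, real_inner_comm p.2 m₂, key1, key2,
      ← MeasureTheory.integral_mul_const]
    refine integral_congr_ae (Filter.Eventually.of_forall fun q => ?_)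
    dsimp only
    rw [← MeasureTheory.integral_const_mul]
  have hexp : ‖μ - P.tmul m₁ m₂‖ ^ 2
      = ⟪μ, μ⟫ + ⟪m₁, m₁⟫ * ⟪m₂, m₂⟫ - 2 * ⟪μ, P.tmul m₁ m₂⟫ := by
    rw [@norm_sub_sq_real, ← real_inner_self_eq_norm_sq, ← real_inner_self_eq_norm_sq,
      P.inner_tmul]
    ring
  rw [hexp, hμμ, hm₁m₁, hm₂m₂, hmix]
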